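/- If p is a prime number, then p divides L(p) − 1, where L(p) is the p-th Lucas number defined by L(1)=1, L(2)=3, L(n)=L(n-1)+L(n-2). -/

import Mathlib

open Finset BigOperators

/-- The compositae: sum over compositions of `n` into `k` positive parts
of products of `a`-values. -/
def compositae (a : ℕ → ℤ) (n k : ℕ) : ℤ :=
  ∑ l ∈ (Finset.Nat.antidiagonalTuple k n).filter (fun l => ∀ i, 0 < l i),
    ∏ i, a (l i)

/-- Lucas numbers: L 0 = 2, L 1 = 1, L n = L (n-1) + L (n-2). -/
def lucas : ℕ → ℤ
  | 0 => 2
  | 1 => 1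
  | n + 2 => lucas (n + 1) + lucas n

theorem stmt_7 (p : ℕ) (hp : Nat.Prime p) : (p : ℤ) ∣ lucas p - 1 := by
  haveI : Fact p.Prime := ⟨hp⟩
  set f : Polynomial (ZMod p) := Polynomial.X ^ 2 - Polynomial.X - 1 with hfdef
  have hdeg : f.degree = 2 := by
    unfold f
    compute_degree!
  haveI : Nontrivial (AdjoinRoot f) := AdjoinRoot.nontrivial f (by rw [hdeg]; decide)
  haveI : CharP (AdjoinRoot f) p := charP_of_injective_algebraMap' (A := AdjoinRoot f) (ZMod p) p
  set α : AdjoinRoot f := AdjoinRoot.root f with hα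
  set β : AdjoinRoot f := 1 - α with hβ
  have hroot : α ^ 2 = α + 1 := by
    have h := AdjoinRoot.eval₂_root f
    simp only [hfdef, Polynomial.eval₂_sub, Polynomial.eval₂_pow, Polynomial.eval₂_X,
      Polynomial.eval₂_one] at h
    rw [← hα] at h
    linear_combination h
  have hβroot : β ^ 2 = β + 1 := by rw [hβ]; ring_nf; linear_combination hroot
  have key : ∀ n : ℕ, ((lucas n : AdjoinRoot f) = α ^ n + β ^ n) ∧
      ((lucas (n + 1) : AdjoinRoot f) = α ^ (n + 1) + β ^ (n + 1)) := by
    intro n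
    induction n with
    | zero => exact ⟨by simp [lucas, hβ]; ring, by simp [lucas, hβ]⟩
    | succ n ih =>
      refine ⟨ih.2, ?_⟩
      have : lucas (n + 2) = lucas (n + 1) + lucas n := rfl
      rw [this]
      push_cast
      rw [ih.1, ih.2]
      have hα2 : α ^ (n + 2) = α ^ (n + 1) + α ^ n := by
        have : α ^ (n + 2) = α ^ n * α ^ 2 := by ring
        rw [this, hroot]; ring
      have hβ2 : β ^ (n + 2) = β ^ (n + 1) + β ^ n := by
        have : β ^ (n + 2) = β ^ n * β ^ 2 := by ring
        rw [this, hβroot]; ring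
      rw [hα2, hβ2]; ring
  have hsum : α + β = 1 := by rw [hβ]; ring
  have hlp : ((lucas p : ℤ) : AdjoinRoot f) = 1 := by
    rw [(key p).1, ← add_pow_char α β, hsum, one_pow]
  have : (((lucas p - 1 : ℤ)) : AdjoinRoot f) = 0 := by push_cast [hlp]; ring
  exact (CharP.intCast_eq_zero_iff (AdjoinRoot f) p _).mp this
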